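/- For any joint probability distribution P over variables V whose independence relation satisfies symmetry, decomposition, weak union, contraction, and intersection (a graphoid), and for any variable X and any subset Z of V not containing X, there exists a unique Markov boundary of X relative to Z, i.e., a unique minimal subset M of Z such that X is independent of Z \ M given M. -/

import Mathlib

open Classical
attribute [local instance] Classical.propDecidable

variable {V : Type} [Fintype V] [DecidableEq V]

/-- A conditional independence model over variable set `V`:
`I A B C` means `A` is independent of `B` given `C`. -/
abbrev IndepModel (V : Type) :=
  Finset V → Finset V → Finset V → Prop

/-- Semigraphoid axioms. -/
structure Semigraphoid (I : IndepModel V) : Prop where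
  symm : ∀ A B C, I A B C → I B A C
  decomposition : ∀ A B W C, I A (B ∪ W) C → I A B C ∧ I A W C
  weakUnion : ∀ A B W C, I A (B ∪ W) C → I A B (C ∪ W)
  contraction : ∀ A B W C, I A B C → I A W (C ∪ B) → I A (B ∪ W) C

/-- Graphoid axioms. -/
structure Graphoid (I : IndepModel V) extends Semigraphoid I : Prop where
  intersection : ∀ A B W C, I A B (C ∪ W) → I A W (C ∪ B) → I A (B ∪ W) C

/-- Compositional graphoid axioms. -/
structure CompGraphoid (I : IndepModel V) extends Graphoid I : Prop where
  composition : ∀ A B W C, I A B C → I A W C → I A (B ∪ W) C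

/-- `M` is a Markov blanket of `X` relative to `Z`. -/
def MarkovBlanket (I : IndepModel V) (X : V) (Z M : Finset V) : Prop :=
  M ⊆ Z ∧ I {X} (Z \ M) M

/-- `M` is a Markov boundary (minimal Markov blanket) of `X` relative to `Z`. -/
def MarkovBoundary (I : IndepModel V) (X : V) (Z M : Finset V) : Prop :=
  MarkovBlanket I X Z M ∧ ∀ M' ⊂ M, ¬ I {X} (Z \ M') M'

/-- A directed graph on `V`, given by its finite set of directed edges. -/
abbrev EdgeSet (V : Type) := Finset (V × V)

def Adj (E : EdgeSet V) (a b : V) : Prop := (a, b) ∈ E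

/-- Acyclicity: no vertex reaches itself by a nontrivial directed path. -/
def IsDAG (E : EdgeSet V) : Prop := ∀ v, ¬ Relation.TransGen (Adj E) v v

def parents (E : EdgeSet V) (v : V) : Finset V :=
  (E.filter (fun e => e.2 = v)).image Prod.fst

def IsCollider (E : EdgeSet V) (x y z : V) : Prop := Adj E x y ∧ Adj E z y

/-- The middle vertex `y` of a path triple `x - y - z` does not block the path
given conditioning set `C`. -/
def ActiveTriple (E : EdgeSet V) (C : Finset V) (x y z : V) : Prop :=
  (IsCollider E x y z ∧ ∃ d ∈ C, Relation.ReflTransGen (Adj E) y d) ∨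
  (¬ IsCollider E x y z ∧ y ∉ C)

/-- `a` and `b` are d-connected given `C` in the graph `E`. -/
def DConn (E : EdgeSet V) (C : Finset V) (a b : V) : Prop :=
  ∃ p : List V, 2 ≤ p.length ∧ p.head? = some a ∧ p.getLast? = some b ∧
    (∀ (i : ℕ) (h : i + 1 < p.length),
      Adj E (p.get ⟨i, by omega⟩) (p.get ⟨i + 1, h⟩) ∨
      Adj E (p.get ⟨i + 1, h⟩) (p.get ⟨i, by omega⟩)) ∧
    (∀ (i : ℕ) (h : i + 2 < p.length),
      ActiveTriple E C (p.get ⟨i, by omega⟩) (p.get ⟨i + 1, by omega⟩) (p.get ⟨i + 2, h⟩))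

/-- `A` and `B` are d-separated given `C`. -/
def DSep (E : EdgeSet V) (A B C : Finset V) : Prop :=
  ∀ a ∈ A, ∀ b ∈ B, ¬ DConn E C a b

def PairwiseDisjoint3 (A B C : Finset V) : Prop :=
  Disjoint A B ∧ Disjoint A C ∧ Disjoint B C

/-- `I(G) ⊆ I(P)`: every d-separation of the graph is an independence of `I`. -/
def Markovian (E : EdgeSet V) (I : IndepModel V) : Prop :=
  ∀ A B C, PairwiseDisjoint3 A B C → DSep E A B C → I A B C

/-- `I(P) ⊆ I(G)`: every independence of `I` is a d-separation of the graph. -/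
def FaithfulTo (E : EdgeSet V) (I : IndepModel V) : Prop :=
  ∀ A B C, PairwiseDisjoint3 A B C → I A B C → DSep E A B C

/-- `I(E) ⊆ I(E')` : every d-separation statement of `E` holds in `E'`. -/
def ISub (E E' : EdgeSet V) : Prop :=
  ∀ A B C, PairwiseDisjoint3 A B C → DSep E A B C → DSep E' A B C

/-- Markov equivalence: same d-separation statements. -/
def MEquiv (E E' : EdgeSet V) : Prop := ISub E E' ∧ ISub E' E

/-- Markovian DAGs. -/
def CMC (I : IndepModel V) : Set (EdgeSet V) := {G | IsDAG G ∧ Markovian G I}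

/-- Faithful DAGs. -/
def CFC (I : IndepModel V) : Set (EdgeSet V) := {G | G ∈ CMC I ∧ FaithfulTo G I}

/-- SGS-minimal DAGs: Markovian with no Markovian proper subgraph. -/
def SGSmin (I : IndepModel V) : Set (EdgeSet V) :=
  {G | G ∈ CMC I ∧ ∀ G' ⊆ G, G' ∈ CMC I → G' = G}

/-- Frugal DAGs: Markovian with minimal edge count. -/
def Fr (I : IndepModel V) : Set (EdgeSet V) :=
  {G | G ∈ CMC I ∧ ∀ G' ∈ CMC I, G.card ≤ G'.card}

/-- Uniquely frugal DAGs. -/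
def uFr (I : IndepModel V) : Set (EdgeSet V) :=
  {G | G ∈ Fr I ∧ ∀ G' ∈ Fr I, MEquiv G' G}

/-- P-minimal DAGs: Markovian `G` such that no Markovian `G'` has `I(G) ⊊ I(G')`. -/
def Pm (I : IndepModel V) : Set (EdgeSet V) :=
  {G | G ∈ CMC I ∧ ∀ G' ∈ CMC I, ISub G G' → ISub G' G}

/-- Uniquely P-minimal DAGs. -/
def uPm (I : IndepModel V) : Set (EdgeSet V) :=
  {G | G ∈ Pm I ∧ ∀ G' ∈ Pm I, MEquiv G' G}

/-- A list is a permutation of the vertices of `V`. -/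
def IsPermList (π : List V) : Prop := π.Nodup ∧ ∀ v : V, v ∈ π

/-- The set of vertices preceding `k` in the permutation `π`. -/
def pre (π : List V) (k : V) : Finset V := (π.takeWhile (fun x => x != k)).toFinset

/-- The DAG induced from a permutation `π` by the Raskutti–Uhler (RU) construction:
`j → k` is an edge iff `j` precedes `k` in `π` and `X_j` is dependent on `X_k`
given all other predecessors of `k`. -/
noncomputable def RUedges (I : IndepModel V) (π : List V) : EdgeSet V :=
  Finset.univ.filter
    (fun e => e.1 ∈ pre π e.2 ∧ ¬ I {e.1} {e.2} ((pre π e.2).erase e.1))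

/-- `j → k` is a covered edge of `E`. -/
def CoveredEdge (E : EdgeSet V) (j k : V) : Prop :=
  (j, k) ∈ E ∧ parents E j = (parents E k).erase j

/-- `j → k` is a singular edge of `E`: no directed path from `j` to `k` other than
the edge itself. -/
def SingularEdge (E : EdgeSet V) (j k : V) : Prop :=
  (j, k) ∈ E ∧
    ∀ i, Relation.TransGen (Adj E) j i → Relation.TransGen (Adj E) i k → i = j ∨ i = k

/-- `π` is a causal order of the graph `E`: every ancestor of a vertex precedes it. -/
def CausalOrder (E : EdgeSet V) (π : List V) : Prop :=
  IsPermList π ∧ ∀ a b, Relation.TransGen (Adj E) a b → π.idxOf a < π.idxOf b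

/-- Two permutations differ by one adjacent transposition. -/
def AdjTrans (π τ : List V) : Prop :=
  ∃ (δ₁ δ₂ : List V) (a b : V), π = δ₁ ++ a :: b :: δ₂ ∧ τ = δ₁ ++ b :: a :: δ₂

/-- The non-descendants of `j` in the graph `E`. -/
noncomputable def nonDesc (E : EdgeSet V) (j : V) : Finset V :=
  Finset.univ.filter (fun i => ¬ Relation.ReflTransGen (Adj E) j i)

/-- Markov blankets are closed under intersection (graphoid). -/
lemma blanket_inter (I : IndepModel V) (hG : Graphoid I) (X : V) (Z M N : Finset V)
    (hM : MarkovBlanket I X Z M) (hN : MarkovBlanket I X Z N) :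
    MarkovBlanket I X Z (M ∩ N) := by
  obtain ⟨hMZ, hMI⟩ := hM
  obtain ⟨hNZ, hNI⟩ := hN
  refine ⟨(Finset.inter_subset_left).trans hMZ, ?_⟩
  set A : Finset V := {X}
  set C := M ∩ N
  set B := M \ N
  set W := N \ M
  set R := Z \ (M ∪ N)
  -- I A W (C ∪ B) from blanket M
  have eM : W ∪ ((Z \ M) \ W) = Z \ M := by
    apply Finset.union_sdiff_of_subset
    intro x hx; simp [W] at hx; simp [hx, hNZ hx.1]
  have eM2 : (C ∪ B : Finset V) = M := by
    ext x; simp [C, B]; tauto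
  have h1 : I A W (C ∪ B) := by
    rw [eM2]
    exact (hG.decomposition A W ((Z \ M) \ W) M (by rw [eM]; exact hMI)).1
  -- I A B (C ∪ W) from blanket N
  have eN : B ∪ ((Z \ N) \ B) = Z \ N := by
    apply Finset.union_sdiff_of_subset
    intro x hx; simp [B] at hx; simp [hx, hMZ hx.1]
  have eN2 : (C ∪ W : Finset V) = N := by
    ext x; simp [C, W]; tauto
  have h2 : I A B (C ∪ W) := by
    rw [eN2]
    exact (hG.decomposition A B ((Z \ N) \ B) N (by rw [eN]; exact hNI)).1
  -- intersection
  have h3 : I A (B ∪ W) C := hG.intersection A B W C h2 h1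
  -- I A R (C ∪ (B ∪ W)) via weak union from blanket M
  have eR : (R ∪ W : Finset V) = Z \ M := by
    ext x; simp [R, W]; constructor
    · rintro (⟨h, _⟩ | h); · tauto
      · exact ⟨hNZ h.1, h.2⟩
    · intro h; by_cases hx : x ∈ N <;> tauto
  have e4 : (M ∪ W : Finset V) = C ∪ (B ∪ W) := by
    ext x; simp [C, B, W]; tauto
  have h4 : I A R (C ∪ (B ∪ W)) := by
    rw [← e4]
    exact hG.weakUnion A R W M (by rw [eR]; exact hMI)
  have h5 : I A ((B ∪ W) ∪ R) C := hG.contraction A (B ∪ W) R C h3 h4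
  have e5 : ((B ∪ W) ∪ R : Finset V) = Z \ C := by
    ext x
    simp only [B, W, R, C, Finset.mem_union, Finset.mem_sdiff, Finset.mem_inter]
    constructor
    · rintro ((h | h) | h)
      · exact ⟨hMZ h.1, fun h' => absurd h'.2 h.2⟩
      · exact ⟨hNZ h.1, fun h' => absurd h'.1 h.2⟩
      · exact ⟨h.1, fun h' => absurd (Or.inl h'.1) h.2⟩
    · rintro ⟨hz, h⟩
      by_cases hm : x ∈ M <;> by_cases hn : x ∈ N <;> tauto
  rwa [e5] at h5

/-- For a graphoid, there is a unique Markov boundary of `X` relative to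
any `Z ⊆ V \ {X}` (trivial independencies `A ⊥ ∅ | C` hold in any distribution). -/
theorem unique_markov_boundary (I : IndepModel V) (hG : Graphoid I)
    (htriv : ∀ A C : Finset V, I A ∅ C)
    (X : V) (Z : Finset V) (hXZ : X ∉ Z) :
    ∃! M : Finset V, MarkovBoundary I X Z M := by
  -- Z itself is a blanket
  have hZ : MarkovBlanket I X Z Z := ⟨le_refl _, by simpa using htriv {X} Z⟩
  -- take a blanket of minimal cardinality
  have hne : ∃ n, ∃ M : Finset V, MarkovBlanket I X Z M ∧ M.card = n :=
    ⟨Z.card, Z, hZ, rfl⟩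
  classical
  obtain ⟨M, hM, hMcard⟩ := Nat.find_spec hne
  have hbd : MarkovBoundary I X Z M := by
    refine ⟨hM, fun M' hM' hI => ?_⟩
    have hblk : MarkovBlanket I X Z M' := ⟨hM'.subset.trans hM.1, hI⟩
    have := Nat.find_min' hne ⟨M', hblk, rfl⟩
    have hlt := Finset.card_lt_card hM'
    omega
  refine ⟨M, hbd, fun N hN => ?_⟩
  -- uniqueness
  have key : ∀ P Q : Finset V, MarkovBoundary I X Z P → MarkovBoundary I X Z Q → P ⊆ Q := by
    intro P Q hP hQ
    have hI := blanket_inter I hG X Z P Q hP.1 hQ.1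
    by_contra hsub
    have hss : P ∩ Q ⊂ P :=
      ⟨Finset.inter_subset_left, fun h => hsub (fun x hx => (Finset.mem_inter.mp (h hx)).2)⟩
    exact hP.2 _ hss hI.2
  exact Finset.Subset.antisymm (key N M hN hbd) (key M N hbd hN)
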